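/- Let Λ₂ = diag(λ̂_{k+1},…,λ̂_n) and Λ₁ = diag(λ̃_1,…,λ̃_k) be diagonal positive definite matrices, and suppose S ∈ ℂ^{(n−k)×k} satisfies Λ₂ S − S Λ₁ = −E Λ₁ for some E. Then ‖S‖_F ≤ ‖E‖_F / gap_comp, where gap_comp = min_{i,j} |λ̂_i − λ̃_j| / λ̃_j, provided gap_comp > 0. -/

import Mathlib

open Matrix
open scoped ComplexOrder

noncomputable def specNorm {n : Type*} [Fintype n] [DecidableEq n] (A : Matrix n n ℂ) : ℝ :=
  ‖Matrix.toEuclideanCLM (𝕜 := ℂ) A‖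

noncomputable def frobNorm {m k : Type*} [Fintype m] [Fintype k] (A : Matrix m k ℂ) : ℝ :=
  Real.sqrt (∑ i, ∑ j, ‖A i j‖ ^ 2)

noncomputable def psqrt {n : Type*} [Fintype n] [DecidableEq n] {A : Matrix n n ℂ}
    (hA : A.PosDef) : Matrix n n ℂ :=
  (hA.posSemidef.1.eigenvectorUnitary : Matrix n n ℂ) *
    diagonal ((↑) ∘ (√·) ∘ hA.posSemidef.1.eigenvalues) *
    (star hA.posSemidef.1.eigenvectorUnitary : Matrix n n ℂ)

theorem stmt_7 {m k : ℕ} (lam2 : Fin m → ℝ) (lam1 : Fin k → ℝ)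
    (h2 : ∀ i, 0 < lam2 i) (h1 : ∀ j, 0 < lam1 j)
    (S E : Matrix (Fin m) (Fin k) ℂ)
    (hS : Matrix.diagonal (fun i => (lam2 i : ℂ)) * S -
        S * Matrix.diagonal (fun j => (lam1 j : ℂ)) =
      -(E * Matrix.diagonal (fun j => (lam1 j : ℂ))))
    (gapc : ℝ) (hg : gapc = ⨅ i, ⨅ j, |lam2 i - lam1 j| / lam1 j) (hpos : 0 < gapc) :
    frobNorm S ≤ frobNorm E / gapc := by
  have key : ∀ i j, ‖S i j‖ ≤ ‖E i j‖ / gapc := by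
    intro i j
    haveI : Nonempty (Fin k) := ⟨j⟩
    haveI : Nonempty (Fin m) := ⟨i⟩
    -- gapc ≤ |lam2 i - lam1 j| / lam1 j
    have hbdd : ∀ i', BddBelow (Set.range fun j' => |lam2 i' - lam1 j'| / lam1 j') := by
      intro i'
      refine ⟨0, ?_⟩
      rintro x ⟨j', rfl⟩
      exact div_nonneg (abs_nonneg _) (h1 j').le
    have hbdd2 : BddBelow (Set.range fun i' => ⨅ j', |lam2 i' - lam1 j'| / lam1 j') := by
      refine ⟨0, ?_⟩
      rintro x ⟨i', rfl⟩
      exact le_ciInf fun j' => div_nonneg (abs_nonneg _) (h1 j').le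
    have hle : gapc ≤ |lam2 i - lam1 j| / lam1 j := by
      rw [hg]
      exact le_trans (ciInf_le hbdd2 i) (ciInf_le (hbdd i) j)
    have hgl : gapc * lam1 j ≤ |lam2 i - lam1 j| := by
      rw [le_div_iff₀ (h1 j)] at hle
      linarith
    have hdpos : 0 < |lam2 i - lam1 j| :=
      lt_of_lt_of_le (mul_pos hpos (h1 j)) hgl
    -- entrywise equation
    have hentry := congrFun (congrFun hS i) j
    simp only [Matrix.sub_apply, Matrix.neg_apply, Matrix.mul_apply, Matrix.diagonal_apply,
      Finset.sum_ite_eq, Finset.sum_ite_eq', Finset.mem_univ, if_true, ite_mul, mul_ite,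
      zero_mul, mul_zero] at hentry
    have heq : ((lam2 i : ℂ) - (lam1 j : ℂ)) * S i j = -((lam1 j : ℂ) * E i j) := by
      ring_nf
      ring_nf at hentry
      linear_combination hentry
    have hn : |lam2 i - lam1 j| * ‖S i j‖ = lam1 j * ‖E i j‖ := by
      have := congrArg norm heq
      rw [norm_mul, norm_neg, norm_mul, ← Complex.ofReal_sub, Complex.norm_real,
        Real.norm_eq_abs, Complex.norm_real, Real.norm_eq_abs, abs_of_pos (h1 j)] at this
      exact this
    rw [le_div_iff₀ hpos]
    have h1j := h1 j
    nlinarith [norm_nonneg (S i j), norm_nonneg (E i j)]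
  rw [frobNorm, frobNorm, div_eq_mul_inv, ← Real.sqrt_sq (inv_nonneg.2 hpos.le),
    ← Real.sqrt_mul (by positivity)]
  apply Real.sqrt_le_sqrt
  calc ∑ i, ∑ j, ‖S i j‖ ^ 2 ≤ ∑ i, ∑ j, ‖E i j‖ ^ 2 * gapc⁻¹ ^ 2 := by
        refine Finset.sum_le_sum fun i _ => Finset.sum_le_sum fun j _ => ?_
        have := pow_le_pow_left₀ (norm_nonneg _) (key i j) 2
        rwa [div_pow, div_eq_mul_inv, ← inv_pow] at this
    _ = (∑ i, ∑ j, ‖E i j‖ ^ 2) * gapc⁻¹ ^ 2 := by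
        simp_rw [← Finset.sum_mul]
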